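/- arXiv:math/0512090 — 2 statements merged into one kernel-verified Lean document; each statement's English description precedes it below -/
import Mathlib

section
/- Let V be a real inner product space of dimension at least 2, let α, β : V → ℝ be linear functionals, and let K ∈ ℝ. If α(u)·β(u) = K·‖u‖² for every u ∈ V, then K = 0. -/
/-- A product of two real linear functionals on an inner product space of
dimension at least two cannot equal a nonzero constant multiple of the
square of the norm. -/
theorem product_of_linear_forms_ne_norm_sq
    {V : Type*} [NormedAddCommGroup V] [InnerProductSpace ℝ V]
    (hV : 2 ≤ Module.rank ℝ V)
    (α β : V →ₗ[ℝ] ℝ) (K : ℝ)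
    (h : ∀ u : V, α u * β u = K * ‖u‖ ^ 2) :
    K = 0 := by
  by_contra hK
  have hinj : Function.Injective α := by
    rw [injective_iff_map_eq_zero]
    intro u hu
    by_contra hu0
    have := h u
    rw [hu, zero_mul] at this
    have : K * ‖u‖ ^ 2 ≠ 0 := by
      exact mul_ne_zero hK (pow_ne_zero 2 (norm_ne_zero_iff.mpr hu0))
    simp_all
  have hle := LinearMap.lift_rank_le_of_injective α hinj
  rw [Module.rank_self, Cardinal.lift_one] at hle
  have h2 : (2 : Cardinal) ≤ Cardinal.lift.{0} (Module.rank ℝ V) := by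
    simpa using (Cardinal.lift_le.{0, u_1}).mpr hV
  have := h2.trans hle
  norm_num at this
end

section
/- Let V be a real inner product space of dimension at least 2, let α, β : V → ℝ be linear functionals, and let K ∈ ℝ. If α(v)·β(v) = K for every unit vector v ∈ V, then K = 0. -/
open scoped RealInnerProductSpace

lemma unit_combo {V : Type*} [NormedAddCommGroup V] [InnerProductSpace ℝ V]
    {e f : V} (he : ‖e‖ = 1) (hf : ‖f‖ = 1) (hef : ⟪e, f⟫ = 0)
    {x y : ℝ} (hxy : x ^ 2 + y ^ 2 = 1) : ‖x • e + y • f‖ = 1 := by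
  have hfe : ⟪f, e⟫ = 0 := by rw [real_inner_comm]; exact hef
  have hin : ⟪x • e + y • f, x • e + y • f⟫ = 1 := by
    simp only [inner_add_left, inner_add_right, real_inner_smul_left, real_inner_smul_right,
      hef, hfe, real_inner_self_eq_norm_sq, norm_smul, mul_pow, Real.norm_eq_abs, sq_abs, he, hf]
    nlinarith [hxy]
  have h2 : ‖x • e + y • f‖ ^ 2 = 1 := by rw [← real_inner_self_eq_norm_sq, hin]
  nlinarith [norm_nonneg (x • e + y • f)]

/-- If a rank-one bilinear form `α ⊗ β` built from two linear functionals takes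
the same value `K` on every unit vector of an inner product space of dimension
at least two, then `K = 0`. -/
theorem product_of_linear_forms_const_on_sphere
    {V : Type*} [NormedAddCommGroup V] [InnerProductSpace ℝ V]
    (hV : 2 ≤ Module.rank ℝ V)
    (α β : V →ₗ[ℝ] ℝ) (K : ℝ)
    (h : ∀ v : V, ‖v‖ = 1 → α v * β v = K) :
    K = 0 := by
  have hpos : 0 < Module.rank ℝ V := lt_of_lt_of_le (by norm_num) hV
  obtain ⟨v, hv⟩ : ∃ v : V, v ≠ 0 := by
    rw [rank_pos_iff_exists_ne_zero] at hpos; exact hpos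
  set e := ‖v‖⁻¹ • v with he_def
  have hvnorm : ‖v‖ ≠ 0 := norm_ne_zero_iff.2 hv
  have he : ‖e‖ = 1 := by
    rw [he_def, norm_smul, norm_inv, norm_norm]
    field_simp
  have hspan : (Submodule.span ℝ {e} : Submodule ℝ V) ≠ ⊤ := by
    intro htop
    have h1 : Module.rank ℝ V ≤ 1 := by
      rw [← rank_top ℝ V, ← htop]
      exact (rank_span_le _).trans (by simp)
    exact absurd (hV.trans h1) (by norm_num)
  obtain ⟨w, hw⟩ : ∃ w : V, w ∉ Submodule.span ℝ {e} := by
    by_contra hc; push_neg at hc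
    exact hspan (Submodule.eq_top_iff'.2 hc)
  set u := w - ⟪e, w⟫ • e with hu_def
  have hu0 : u ≠ 0 := by
    intro h0
    apply hw
    have hweq : w = ⟪e, w⟫ • e := by
      rwa [sub_eq_zero] at h0
    rw [hweq]
    exact Submodule.smul_mem _ _ (Submodule.mem_span_singleton_self e)
  set f := ‖u‖⁻¹ • u with hf_def
  have hunorm : ‖u‖ ≠ 0 := norm_ne_zero_iff.2 hu0
  have hf : ‖f‖ = 1 := by
    rw [hf_def, norm_smul, norm_inv, norm_norm]
    field_simp
  have hef : ⟪e, f⟫ = 0 := by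
    rw [hf_def, real_inner_smul_right, hu_def, inner_sub_right, real_inner_smul_right,
      real_inner_self_eq_norm_sq, he]
    ring
  -- evaluate h on four unit vectors
  set a := α e; set b := α f; set c := β e; set d := β f
  have s : ℝ := Real.sqrt 2
  have hs : (Real.sqrt 2 / 2) ^ 2 + (Real.sqrt 2 / 2) ^ 2 = 1 := by
    have : Real.sqrt 2 ^ 2 = 2 := Real.sq_sqrt (by norm_num)
    nlinarith
  have hs' : (Real.sqrt 2 / 2) ^ 2 + (-(Real.sqrt 2 / 2)) ^ 2 = 1 := by
    nlinarith [hs]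
  have h1 : a * c = K := by
    have := h ((1:ℝ) • e + (0:ℝ) • f) (unit_combo he hf hef (by norm_num))
    simpa using this
  have h2 : b * d = K := by
    have := h ((0:ℝ) • e + (1:ℝ) • f) (unit_combo he hf hef (by norm_num))
    simpa using this
  have h3 : (Real.sqrt 2 / 2 * a + Real.sqrt 2 / 2 * b) *
      (Real.sqrt 2 / 2 * c + Real.sqrt 2 / 2 * d) = K := by
    have := h ((Real.sqrt 2 / 2) • e + (Real.sqrt 2 / 2) • f) (unit_combo he hf hef hs)
    simpa [map_add, map_smul, smul_eq_mul] using this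
  have h4 : (Real.sqrt 2 / 2 * a + (-(Real.sqrt 2 / 2)) * b) *
      (Real.sqrt 2 / 2 * c + (-(Real.sqrt 2 / 2)) * d) = K := by
    have := h ((Real.sqrt 2 / 2) • e + (-(Real.sqrt 2 / 2)) • f) (unit_combo he hf hef hs')
    simpa [map_add, map_smul, smul_eq_mul] using this
  have hsq : Real.sqrt 2 ^ 2 = 2 := Real.sq_sqrt (by norm_num)
  -- from h3 + h4: (a*c + b*d)/... derive a*d + b*c = 0
  have had : a * d + b * c = 0 := by nlinarith [h1, h2, h3, h4, hsq]
  nlinarith [h1, h2, had, sq_nonneg (b*c), sq_nonneg K, mul_self_nonneg (a*d)]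
end
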